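/- Under the hypotheses ‖Q − Q̃‖_∞ ≤ ε and β > 0, the pointwise difference of the exponentially tilted densities satisfies |π_Q(a) − π_{Q̃}(a)| ≤ (e^{2βε} − 1) π_{Q̃}(a) for μ-almost every a. -/

import Mathlib

open MeasureTheory Real

/-- Under the hypotheses `‖Q − Q'‖_∞ ≤ ε` and `β > 0`, the pointwise
difference of the exponentially tilted densities satisfies
`|πQ(a) − πQ'(a)| ≤ (e^{2βε} − 1) πQ'(a)` for `μ`-almost every `a`. -/
theorem stmt_4 {α : Type*} [MeasurableSpace α] (μ : Measure α) [SigmaFinite μ]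
    (πb Q Q' : α → ℝ) (β ε : ℝ) (hβ : 0 < β) (hε : 0 ≤ ε)
    (hπb_meas : Measurable πb) (hπb_pos : ∀ᵐ a ∂μ, 0 < πb a)
    (hπb_prob : ∫ a, πb a ∂μ = 1)
    (hQ_meas : Measurable Q) (hQ'_meas : Measurable Q')
    (hQ_bdd : ∃ C, ∀ a, |Q a| ≤ C) (hQ'_bdd : ∃ C, ∀ a, |Q' a| ≤ C)
    (hdiff : ∀ a, |Q a - Q' a| ≤ ε)
    (ZQ ZQ' : ℝ)
    (hZQ : ZQ = ∫ a, πb a * exp (β * Q a) ∂μ)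
    (hZQ' : ZQ' = ∫ a, πb a * exp (β * Q' a) ∂μ)
    (hZQ_int : Integrable (fun a => πb a * exp (β * Q a)) μ)
    (hZQ'_int : Integrable (fun a => πb a * exp (β * Q' a)) μ)
    (hZQ_pos : 0 < ZQ) (hZQ'_pos : 0 < ZQ')
    (πQ πQ' : α → ℝ)
    (hπQ : ∀ a, πQ a = πb a * exp (β * Q a) / ZQ)
    (hπQ' : ∀ a, πQ' a = πb a * exp (β * Q' a) / ZQ') :
    ∀ᵐ a ∂μ, |πQ a - πQ' a| ≤ (exp (2 * β * ε) - 1) * πQ' a := by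

  have hz : ZQ ≠ 0 := hZQ_pos.ne'
  have hz' : ZQ' ≠ 0 := hZQ'_pos.ne'
  have hee : ∀ a, exp (β * Q a) ≤ exp (β * ε) * exp (β * Q' a) := fun a => by
    rw [← exp_add, exp_le_exp]
    nlinarith [(abs_le.1 (hdiff a)).2, hβ.le]
  have hee' : ∀ a, exp (β * Q' a) ≤ exp (β * ε) * exp (β * Q a) := fun a => by
    rw [← exp_add, exp_le_exp]
    nlinarith [(abs_le.1 (hdiff a)).1, hβ.le]
  have hZle : ZQ ≤ exp (β * ε) * ZQ' := by
    rw [hZQ, hZQ', ← integral_const_mul]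
    refine integral_mono_ae hZQ_int (hZQ'_int.const_mul _) ?_
    filter_upwards [hπb_pos] with a ha
    calc πb a * exp (β * Q a) ≤ πb a * (exp (β * ε) * exp (β * Q' a)) :=
          mul_le_mul_of_nonneg_left (hee a) ha.le
      _ = exp (β * ε) * (πb a * exp (β * Q' a)) := by ring
  have hZ'le : ZQ' ≤ exp (β * ε) * ZQ := by
    rw [hZQ, hZQ', ← integral_const_mul]
    refine integral_mono_ae hZQ'_int (hZQ_int.const_mul _) ?_
    filter_upwards [hπb_pos] with a ha
    calc πb a * exp (β * Q' a) ≤ πb a * (exp (β * ε) * exp (β * Q a)) :=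
          mul_le_mul_of_nonneg_left (hee' a) ha.le
      _ = exp (β * ε) * (πb a * exp (β * Q a)) := by ring
  have key : ∀ a, πQ a = πQ' a * (exp (β * (Q a - Q' a)) * (ZQ' / ZQ)) := fun a => by
    have h1 : exp (β * Q' a) * exp (β * (Q a - Q' a)) = exp (β * Q a) := by
      rw [← exp_add]; ring_nf
    rw [hπQ, hπQ']
    field_simp
    linear_combination (-(πb a)) * h1
  have hrub : ∀ a, exp (β * (Q a - Q' a)) * (ZQ' / ZQ) ≤ exp (2 * β * ε) := fun a => by
    have h1 : exp (β * (Q a - Q' a)) ≤ exp (β * ε) := by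
      rw [exp_le_exp]; nlinarith [(abs_le.1 (hdiff a)).2, hβ.le]
    have h2 : ZQ' / ZQ ≤ exp (β * ε) := (div_le_iff₀ hZQ_pos).2 hZ'le
    have h3 : (0:ℝ) < exp (β * (Q a - Q' a)) := exp_pos _
    have h4 : (0:ℝ) ≤ ZQ' / ZQ := div_nonneg hZQ'_pos.le hZQ_pos.le
    calc exp (β * (Q a - Q' a)) * (ZQ' / ZQ) ≤ exp (β * ε) * exp (β * ε) :=
          mul_le_mul h1 h2 h4 (exp_pos _).le
      _ = exp (2 * β * ε) := by rw [← exp_add]; ring_nf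
  have hrlb : ∀ a, exp (-(2 * β * ε)) ≤ exp (β * (Q a - Q' a)) * (ZQ' / ZQ) := fun a => by
    have h1 : exp (-(β * ε)) ≤ exp (β * (Q a - Q' a)) := by
      rw [exp_le_exp]; nlinarith [(abs_le.1 (hdiff a)).1, hβ.le]
    have h2 : exp (-(β * ε)) ≤ ZQ' / ZQ := by
      rw [le_div_iff₀ hZQ_pos]
      have := hZle
      have he : (0:ℝ) < exp (β * ε) := exp_pos _
      rw [exp_neg]
      rw [inv_mul_le_iff₀ he] at *
      nlinarith
    calc exp (-(2 * β * ε)) = exp (-(β * ε)) * exp (-(β * ε)) := by rw [← exp_add]; ring_nf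
      _ ≤ exp (β * (Q a - Q' a)) * (ZQ' / ZQ) :=
          mul_le_mul h1 h2 (exp_pos _).le (exp_pos _).le
  filter_upwards [hπb_pos] with a ha
  have hπQ'pos : 0 ≤ πQ' a := by
    rw [hπQ']; positivity
  set r := exp (β * (Q a - Q' a)) * (ZQ' / ZQ) with hr
  have h1 : |πQ a - πQ' a| = πQ' a * |r - 1| := by
    rw [key a, ← hr, show πQ' a * r - πQ' a = πQ' a * (r - 1) by ring, abs_mul,
      abs_of_nonneg hπQ'pos]
  rw [h1, mul_comm]
  apply mul_le_mul_of_nonneg_right _ hπQ'pos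
  rw [abs_le]
  have hub := hrub a
  have hlb := hrlb a
  have hprod : exp (2 * β * ε) * exp (-(2 * β * ε)) = 1 := by
    rw [← exp_add]; ring_nf; exact exp_zero
  constructor
  · nlinarith [exp_pos (2 * β * ε), exp_pos (-(2 * β * ε))]
  · linarith
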